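/- arXiv:1911.11076 — 2 statements merged into one kernel-verified Lean document; each statement's English description precedes it below -/
import Mathlib

section
/- (Bilinear frequency-restricted estimate for KdV, nonresonant case) For s ≥ 0, α ∈ ℝ, M ≥ 1, and f, g, h nonnegative L² functions on ℝ, the integral ∫∫ 1_{|3ξξ₁(ξ-ξ₁)-α|<M} · 1_{|ξ-2ξ₁| ≥ c|ξ|} · |ξ| · ⟨ξ⟩^s ⟨ξ₁⟩^{-s} ⟨ξ-ξ₁⟩^{-s} f(ξ₁) g(ξ-ξ₁) h(ξ) dξ₁ dξ ≲_c M^{1/2} ‖f‖_{L²}‖g‖_{L²}‖h‖_{L²}. -/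
open MeasureTheory Set
open scoped ENNReal

lemma vol_sqrt_set (m r A B : ℝ) (hr : 0 < r) :
    volume {x : ℝ | r ≤ |x - m| ∧ A ≤ (x - m)^2 ∧ (x - m)^2 ≤ B}
      ≤ ENNReal.ofReal ((B - A)/r) := by
  set A' := max A (r^2) with hA'
  have hsub : {x : ℝ | r ≤ |x - m| ∧ A ≤ (x - m)^2 ∧ (x - m)^2 ≤ B}
      ⊆ Icc (m - Real.sqrt B) (m - Real.sqrt A') ∪ Icc (m + Real.sqrt A') (m + Real.sqrt B) := by
    rintro x ⟨h1, h2, h3⟩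
    have hu2 : A' ≤ (x - m)^2 := by
      refine max_le h2 ?_
      calc r^2 ≤ |x - m|^2 := pow_le_pow_left₀ hr.le h1 2
      _ = (x - m)^2 := sq_abs _
    have hle : Real.sqrt A' ≤ |x - m| := by
      calc Real.sqrt A' ≤ Real.sqrt ((x-m)^2) := Real.sqrt_le_sqrt hu2
      _ = |x - m| := Real.sqrt_sq_eq_abs _
    have hge : |x - m| ≤ Real.sqrt B := by
      rw [← Real.sqrt_sq_eq_abs]; exact Real.sqrt_le_sqrt h3
    rcases le_total m x with hx | hx
    · right
      rw [abs_of_nonneg (by linarith)] at hle hge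
      constructor <;> linarith
    · left
      rw [abs_of_nonpos (by linarith)] at hle hge
      constructor <;> linarith
  refine (measure_mono hsub).trans ((measure_union_le _ _).trans ?_)
  rw [Real.volume_Icc, Real.volume_Icc]
  have e1 : m - Real.sqrt A' - (m - Real.sqrt B) = Real.sqrt B - Real.sqrt A' := by ring
  have e2 : m + Real.sqrt B - (m + Real.sqrt A') = Real.sqrt B - Real.sqrt A' := by ring
  rw [e1, e2]
  set t := Real.sqrt B - Real.sqrt A' with ht
  rcases le_or_gt t 0 with h | h
  · simp [ENNReal.ofReal_eq_zero.2 h]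
  · rw [← ENNReal.ofReal_add h.le h.le]
    apply ENNReal.ofReal_le_ofReal
    have hrA : r ≤ Real.sqrt A' := by
      rw [hA']
      calc r = Real.sqrt (r^2) := (Real.sqrt_sq hr.le).symm
      _ ≤ Real.sqrt (max A (r^2)) := Real.sqrt_le_sqrt (le_max_right _ _)
    have hAB : A' ≤ B := by
      by_contra hco
      push_neg at hco
      have : Real.sqrt B ≤ Real.sqrt A' := Real.sqrt_le_sqrt hco.le
      linarith
    have hB0 : 0 ≤ B := le_trans (le_max_of_le_right (sq_nonneg r)) hAB
    have key : (Real.sqrt B - Real.sqrt A') * (Real.sqrt B + Real.sqrt A') = B - A' := by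
      have h1 : Real.sqrt B * Real.sqrt B = B := Real.mul_self_sqrt hB0
      have h2 : Real.sqrt A' * Real.sqrt A' = A' := Real.mul_self_sqrt (le_trans (sq_nonneg r) (le_max_right _ _))
      nlinarith [h1, h2]
    have hsum : 2*r ≤ Real.sqrt B + Real.sqrt A' := by
      have : r ≤ Real.sqrt B := le_trans hrA (by linarith)
      linarith
    have hAA : A ≤ A' := le_max_left _ _
    have h2r : (0:ℝ) < 2*r := by linarith
    have hq : (Real.sqrt B - Real.sqrt A') * (2*r) ≤ B - A' := by
      calc (Real.sqrt B - Real.sqrt A') * (2*r)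
          ≤ (Real.sqrt B - Real.sqrt A') * (Real.sqrt B + Real.sqrt A') := by
            have : (0:ℝ) ≤ Real.sqrt B - Real.sqrt A' := by rw [← ht]; exact h.le
            gcongr
      _ = B - A' := key
    rw [ht] at h ⊢
    rw [le_div_iff₀ hr]
    nlinarith [hq, hAA]

lemma vol_level_set (c : ℝ) (hc : 0 < c) (α M ξ : ℝ) (hξ : ξ ≠ 0) :
    volume {x : ℝ | |3*ξ*x*(ξ-x) - α| < M ∧ c*|ξ| ≤ |ξ - 2*x|}
      ≤ ENNReal.ofReal (4*M/(3*c*ξ^2)) := by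
  have hr : (0:ℝ) < c*|ξ|/2 := by
    have := abs_pos.mpr hξ; positivity
  set β := (3/4)*ξ^3 - α with hβ
  rcases hξ.lt_or_gt with hneg | hpos
  · -- ξ < 0
    refine le_trans (le_trans (measure_mono ?_)
      (vol_sqrt_set (ξ/2) (c*|ξ|/2) ((β + M)/(3*ξ)) ((β - M)/(3*ξ)) hr)) (le_of_eq ?_)
    · rintro x ⟨h1, h2⟩
      have habs : |ξ - 2*x| = 2*|x - ξ/2| := by
        rw [show ξ - 2*x = -(2*(x - ξ/2)) by ring, abs_neg, abs_mul, abs_two]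
      have key : 3*ξ*x*(ξ-x) - α = β - 3*ξ*(x - ξ/2)^2 := by rw [hβ]; ring
      rw [key] at h1
      have h1' := abs_lt.mp h1
      refine ⟨by rw [habs] at h2; linarith, ?_, ?_⟩
      · rw [div_le_iff_of_neg (by linarith : 3*ξ < 0)]; nlinarith [h1'.1, h1'.2]
      · rw [le_div_iff_of_neg (by linarith : 3*ξ < 0)]; nlinarith [h1'.1, h1'.2]
    · congr 1
      have habs : |ξ| = -ξ := abs_of_neg hneg
      field_simp [habs]
      rw [habs]; ring
  · -- ξ > 0
    refine le_trans (le_trans (measure_mono ?_)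
      (vol_sqrt_set (ξ/2) (c*|ξ|/2) ((β - M)/(3*ξ)) ((β + M)/(3*ξ)) hr)) (le_of_eq ?_)
    · rintro x ⟨h1, h2⟩
      have habs : |ξ - 2*x| = 2*|x - ξ/2| := by
        rw [show ξ - 2*x = -(2*(x - ξ/2)) by ring, abs_neg, abs_mul, abs_two]
      have key : 3*ξ*x*(ξ-x) - α = β - 3*ξ*(x - ξ/2)^2 := by rw [hβ]; ring
      rw [key] at h1
      have h1' := abs_lt.mp h1
      refine ⟨by rw [habs] at h2; linarith, ?_, ?_⟩
      · rw [div_le_iff₀ (by linarith : (0:ℝ) < 3*ξ)]; nlinarith [h1'.1, h1'.2]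
      · rw [le_div_iff₀ (by linarith : (0:ℝ) < 3*ξ)]; nlinarith [h1'.1, h1'.2]
    · congr 1
      have habs : |ξ| = ξ := abs_of_pos hpos
      field_simp [habs]
      rw [habs]; ring

lemma weight_le (s : ℝ) (hs : 0 ≤ s) (y x : ℝ) :
    |y| * (1 + y^2) ^ (s/2) * (1 + x^2) ^ (-s/2) * (1 + (y - x)^2) ^ (-s/2)
      ≤ 2 ^ (s/2) * |y| := by
  have hx : (0:ℝ) < 1 + x^2 := by positivity
  have hyx : (0:ℝ) < 1 + (y - x)^2 := by positivity
  have hy : (0:ℝ) < 1 + y^2 := by positivity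
  set P := (1 + x^2) ^ (s/2) with hP
  set Q := (1 + (y - x)^2) ^ (s/2) with hQ
  have hPpos : 0 < P := Real.rpow_pos_of_pos hx _
  have hQpos : 0 < Q := Real.rpow_pos_of_pos hyx _
  have hkey : (1 + y^2) ^ (s/2) ≤ 2 ^ (s/2) * (P * Q) := by
    rw [hP, hQ, ← Real.mul_rpow (by positivity) (by positivity),
      ← Real.mul_rpow (by norm_num) (by positivity)]
    apply Real.rpow_le_rpow hy.le _ (by linarith)
    nlinarith [sq_nonneg (x - (y - x)), sq_nonneg (x*(y-x))]
  have hneg : ∀ a : ℝ, 0 < a → a ^ (-s/2) = (a ^ (s/2))⁻¹ := by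
    intro a ha
    rw [neg_div, Real.rpow_neg ha.le]
  rw [hneg _ hx, hneg _ hyx, ← hP, ← hQ]
  calc |y| * (1 + y^2) ^ (s/2) * P⁻¹ * Q⁻¹
      ≤ |y| * (2 ^ (s/2) * (P * Q)) * P⁻¹ * Q⁻¹ := by gcongr
  _ = 2 ^ (s/2) * |y| := by field_simp

noncomputable def kdvW (s y x : ℝ) : ℝ :=
  |y| * (1 + y^2) ^ (s/2) * (1 + x^2) ^ (-s/2) * (1 + (y - x)^2) ^ (-s/2)

lemma kdvW_nonneg (s y x : ℝ) : 0 ≤ kdvW s y x := by unfold kdvW; positivity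

lemma kdvW_meas1 (s y : ℝ) : Measurable (kdvW s y) := by unfold kdvW; fun_prop

/-- Bilinear frequency-restricted estimate for KdV, nonresonant case: with
`Φ(ξ,ξ₁) = 3ξξ₁(ξ-ξ₁)`, on the region `|ξ-2ξ₁| ≥ c|ξ|` and `|Φ-α| < M` one has
`∫∫ |ξ| ⟨ξ⟩^s ⟨ξ₁⟩^{-s} ⟨ξ-ξ₁⟩^{-s} f(ξ₁) g(ξ-ξ₁) h(ξ) ≲_c M^{1/2} ‖f‖‖g‖‖h‖`.
Here `p.1 = ξ₁`, `p.2 = ξ` and `⟨x⟩ = (1+x²)^{1/2}`. -/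
theorem kdv_bilinear_frequency_restricted (s : ℝ) (hs : 0 ≤ s) (c : ℝ) (hc : 0 < c) :
    ∃ C > 0, ∀ (α M : ℝ), 1 ≤ M → ∀ f g h : ℝ → ℝ,
      Measurable f → Measurable g → Measurable h →
      (∀ x, 0 ≤ f x) → (∀ x, 0 ≤ g x) → (∀ x, 0 ≤ h x) →
      (∫⁻ p in {p : ℝ × ℝ |
            |3 * p.2 * p.1 * (p.2 - p.1) - α| < M ∧ c * |p.2| ≤ |p.2 - 2 * p.1|},
          ENNReal.ofReal (|p.2| * (1 + p.2^2) ^ (s/2) * (1 + p.1^2) ^ (-s/2)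
            * (1 + (p.2 - p.1)^2) ^ (-s/2) * f p.1 * g (p.2 - p.1) * h p.2))
        ≤ ENNReal.ofReal (C * M ^ ((1:ℝ)/2))
          * (∫⁻ x : ℝ, ENNReal.ofReal ((f x)^2)) ^ ((1:ℝ)/2)
          * (∫⁻ x : ℝ, ENNReal.ofReal ((g x)^2)) ^ ((1:ℝ)/2)
          * (∫⁻ x : ℝ, ENNReal.ofReal ((h x)^2)) ^ ((1:ℝ)/2) := by
  have hconj : (2:ℝ).HolderConjugate 2 := Real.holderConjugate_iff.mpr ⟨one_lt_two, by norm_num⟩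
  refine ⟨Real.sqrt (2^s * (4/(3*c))), Real.sqrt_pos.mpr (by positivity), ?_⟩
  intro α M hM f g h hf hg hh hf0 hg0 hh0
  have hM0 : (0:ℝ) < M := by linarith
  set D : ℝ := 2^s * (4*M/(3*c)) with hD
  have hD0 : (0:ℝ) ≤ D := by positivity
  have hCM : Real.sqrt D = Real.sqrt (2^s*(4/(3*c))) * M ^ ((1:ℝ)/2) := by
    rw [hD, show 2^s * (4*M/(3*c)) = (2^s*(4/(3*c))) * M by ring,
      Real.sqrt_mul (by positivity), Real.sqrt_eq_rpow M]
  set E : Set (ℝ × ℝ) := {p : ℝ × ℝ |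
      |3 * p.2 * p.1 * (p.2 - p.1) - α| < M ∧ c * |p.2| ≤ |p.2 - 2 * p.1|} with hE
  have hEm : MeasurableSet E := by
    have h1 : MeasurableSet {p : ℝ × ℝ | |3 * p.2 * p.1 * (p.2 - p.1) - α| < M} :=
      measurableSet_lt (by fun_prop) measurable_const
    have h2 : MeasurableSet {p : ℝ × ℝ | c * |p.2| ≤ |p.2 - 2 * p.1|} :=
      measurableSet_le (by fun_prop) (by fun_prop)
    exact h1.inter h2
  set φ : ℝ × ℝ → ℝ≥0∞ := fun p => ENNReal.ofReal (|p.2| * (1 + p.2^2) ^ (s/2)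
      * (1 + p.1^2) ^ (-s/2) * (1 + (p.2 - p.1)^2) ^ (-s/2)
      * f p.1 * g (p.2 - p.1) * h p.2) with hφ
  have hφm : Measurable φ := by rw [hφ]; fun_prop
  set J : ℝ → ℝ≥0∞ := fun y => ∫⁻ x, ENNReal.ofReal (f x ^ 2 * g (y - x) ^ 2) with hJ
  have hJm : Measurable J := by
    have hmq : Measurable fun q : ℝ × ℝ => ENNReal.ofReal (f q.2 ^ 2 * g (q.1 - q.2) ^ 2) := by
      fun_prop
    exact hmq.lintegral_prod_right'
  -- inner estimate
  have inner : ∀ y : ℝ, (∫⁻ x, E.indicator φ (x, y)) ≤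
      ENNReal.ofReal (Real.sqrt D) * (ENNReal.ofReal (h y) * (J y) ^ ((1:ℝ)/2)) := by
    intro y
    set T : Set ℝ := {x : ℝ | |3*y*x*(y-x) - α| < M ∧ c*|y| ≤ |y - 2*x|} with hT
    have hTm : MeasurableSet T := by
      have h1 : MeasurableSet {x : ℝ | |3*y*x*(y-x) - α| < M} :=
        measurableSet_lt (by fun_prop) measurable_const
      have h2 : MeasurableSet {x : ℝ | c*|y| ≤ |y - 2*x|} :=
        measurableSet_le (by fun_prop) (by fun_prop)
      exact h1.inter h2
    set K : ℝ → ℝ≥0∞ := fun x => T.indicator (fun x => ENNReal.ofReal (kdvW s y x)) x with hK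
    have hKm : Measurable K := ((kdvW_meas1 s y).ennreal_ofReal).indicator hTm
    have hFG : ∀ x : ℝ, (0:ℝ) ≤ f x * g (y - x) := fun x => mul_nonneg (hf0 x) (hg0 (y - x))
    have hFGm : Measurable fun x => ENNReal.ofReal (f x * g (y - x)) := by fun_prop
    have hsplit : ∀ x, E.indicator φ (x, y)
        = K x * ENNReal.ofReal (f x * g (y - x)) * ENNReal.ofReal (h y) := by
      intro x
      by_cases hx : x ∈ T
      · have hxE : (x, y) ∈ E := hx
        rw [Set.indicator_of_mem hxE, hK]
        simp only [Set.indicator_of_mem hx, hφ]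
        rw [← ENNReal.ofReal_mul (kdvW_nonneg s y x),
          ← ENNReal.ofReal_mul (mul_nonneg (kdvW_nonneg s y x) (hFG x))]
        congr 1
        unfold kdvW
        ring
      · have hxE : (x, y) ∉ E := hx
        simp [Set.indicator_of_notMem hxE, hK, Set.indicator_of_notMem hx]
    have hKbound : (∫⁻ x, K x ^ (2:ℝ)) ^ ((1:ℝ)/2) ≤ ENNReal.ofReal (Real.sqrt D) := by
      have h1 : ∀ x, K x ^ (2:ℝ) ≤ T.indicator (fun _ => ENNReal.ofReal (2^s * y^2)) x := by
        intro x
        by_cases hx : x ∈ T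
        · simp only [hK, Set.indicator_of_mem hx]
          rw [ENNReal.ofReal_rpow_of_nonneg (kdvW_nonneg s y x) (by norm_num : (0:ℝ) ≤ 2),
            show (2:ℝ) = ((2:ℕ):ℝ) by norm_num, Real.rpow_natCast]
          apply ENNReal.ofReal_le_ofReal
          have hb : kdvW s y x ≤ 2^(s/2) * |y| := weight_le s hs y x
          have hsq : ((2:ℝ)^(s/2)*|y|)^2 = 2^s*y^2 := by
            rw [mul_pow, sq_abs, sq, ← Real.rpow_add two_pos, add_halves]
          calc kdvW s y x ^ 2 ≤ (2^(s/2)*|y|)^2 :=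
                pow_le_pow_left₀ (kdvW_nonneg s y x) hb 2
          _ = 2^s*y^2 := hsq
        · simp [hK, Set.indicator_of_notMem hx,
            ENNReal.zero_rpow_of_pos (by norm_num : (0:ℝ) < 2)]
      have h2 : ∫⁻ x, K x ^ (2:ℝ) ≤ ENNReal.ofReal (2^s*y^2) * volume T :=
        (lintegral_mono h1).trans_eq (by rw [lintegral_indicator hTm, setLIntegral_const])
      have h3 : ENNReal.ofReal (2^s*y^2) * volume T ≤ ENNReal.ofReal D := by
        rcases eq_or_ne y 0 with rfl | hy
        · simp
        · calc ENNReal.ofReal (2^s*y^2) * volume T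
              ≤ ENNReal.ofReal (2^s*y^2) * ENNReal.ofReal (4*M/(3*c*y^2)) := by
                gcongr
                exact vol_level_set c hc α M y hy
          _ = ENNReal.ofReal (2^s*y^2 * (4*M/(3*c*y^2))) :=
              (ENNReal.ofReal_mul (by positivity)).symm
          _ = ENNReal.ofReal D := by rw [hD]; congr 1; field_simp
      calc (∫⁻ x, K x ^ (2:ℝ)) ^ ((1:ℝ)/2) ≤ (ENNReal.ofReal D) ^ ((1:ℝ)/2) :=
            ENNReal.rpow_le_rpow (h2.trans h3) (by norm_num)
      _ = ENNReal.ofReal (Real.sqrt D) := by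
          rw [ENNReal.ofReal_rpow_of_nonneg hD0 (by norm_num : (0:ℝ) ≤ 1/2),
            ← Real.sqrt_eq_rpow]
    have hJeq : (∫⁻ x, ENNReal.ofReal (f x * g (y - x)) ^ (2:ℝ)) = J y := by
      apply lintegral_congr
      intro x
      rw [ENNReal.ofReal_rpow_of_nonneg (hFG x) (by norm_num : (0:ℝ) ≤ 2),
        show (2:ℝ) = ((2:ℕ):ℝ) by norm_num, Real.rpow_natCast, mul_pow]
    calc (∫⁻ x, E.indicator φ (x, y))
        = ∫⁻ x, K x * ENNReal.ofReal (f x * g (y - x)) * ENNReal.ofReal (h y) :=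
          lintegral_congr hsplit
      _ = (∫⁻ x, K x * ENNReal.ofReal (f x * g (y - x))) * ENNReal.ofReal (h y) :=
          lintegral_mul_const _ (hKm.mul hFGm)
      _ ≤ ((∫⁻ x, K x ^ (2:ℝ)) ^ ((1:ℝ)/2)
            * (∫⁻ x, ENNReal.ofReal (f x * g (y - x)) ^ (2:ℝ)) ^ ((1:ℝ)/2))
            * ENNReal.ofReal (h y) :=
          mul_le_mul_left
            (ENNReal.lintegral_mul_le_Lp_mul_Lq volume hconj hKm.aemeasurable
              hFGm.aemeasurable) _
      _ = ((∫⁻ x, K x ^ (2:ℝ)) ^ ((1:ℝ)/2) * (J y) ^ ((1:ℝ)/2)) * ENNReal.ofReal (h y) := by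
          rw [hJeq]
      _ ≤ (ENNReal.ofReal (Real.sqrt D) * (J y) ^ ((1:ℝ)/2)) * ENNReal.ofReal (h y) := by
          gcongr
      _ = ENNReal.ofReal (Real.sqrt D) * (ENNReal.ofReal (h y) * (J y) ^ ((1:ℝ)/2)) := by
          ring
  -- outer estimate
  have hcs2 : ∫⁻ y, ENNReal.ofReal (h y) * (J y) ^ ((1:ℝ)/2) ≤
      (∫⁻ y, ENNReal.ofReal (h y) ^ (2:ℝ)) ^ ((1:ℝ)/2)
        * (∫⁻ y, ((J y) ^ ((1:ℝ)/2)) ^ (2:ℝ)) ^ ((1:ℝ)/2) :=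
    ENNReal.lintegral_mul_le_Lp_mul_Lq volume hconj (hh.ennreal_ofReal).aemeasurable
      ((hJm.pow_const _).aemeasurable)
  have e1 : (∫⁻ y, ENNReal.ofReal (h y) ^ (2:ℝ)) = ∫⁻ x, ENNReal.ofReal ((h x)^2) :=
    lintegral_congr fun y => by
      rw [ENNReal.ofReal_rpow_of_nonneg (hh0 y) (by norm_num : (0:ℝ) ≤ 2),
        show (2:ℝ) = ((2:ℕ):ℝ) by norm_num, Real.rpow_natCast]
  have e2 : (∫⁻ y, ((J y) ^ ((1:ℝ)/2)) ^ (2:ℝ)) = ∫⁻ y, J y :=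
    lintegral_congr fun y => by rw [← ENNReal.rpow_mul]; norm_num
  have e3 : ∫⁻ y, J y
      = (∫⁻ x, ENNReal.ofReal ((f x)^2)) * (∫⁻ x, ENNReal.ofReal ((g x)^2)) := by
    have hswap : ∫⁻ y, J y = ∫⁻ x, ∫⁻ y, ENNReal.ofReal (f x ^ 2 * g (y - x) ^ 2) := by
      rw [hJ]
      exact lintegral_lintegral_swap
        ((by fun_prop : Measurable fun q : ℝ × ℝ =>
          ENNReal.ofReal (f q.2 ^ 2 * g (q.1 - q.2) ^ 2))).aemeasurable
    rw [hswap]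
    have hinner : ∀ x : ℝ, ∫⁻ y, ENNReal.ofReal (f x ^ 2 * g (y - x) ^ 2)
        = ENNReal.ofReal (f x ^ 2) * ∫⁻ u, ENNReal.ofReal (g u ^ 2) := by
      intro x
      calc ∫⁻ y, ENNReal.ofReal (f x ^ 2 * g (y - x) ^ 2)
          = ∫⁻ y, ENNReal.ofReal (f x ^ 2) * ENNReal.ofReal (g (y - x) ^ 2) :=
            lintegral_congr fun y => ENNReal.ofReal_mul (sq_nonneg _)
        _ = ENNReal.ofReal (f x ^ 2) * ∫⁻ y, ENNReal.ofReal (g (y - x) ^ 2) :=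
            lintegral_const_mul' _ _ ENNReal.ofReal_ne_top
        _ = ENNReal.ofReal (f x ^ 2) * ∫⁻ u, ENNReal.ofReal (g u ^ 2) := by
            rw [lintegral_sub_right_eq_self (fun u => ENNReal.ofReal (g u ^ 2)) x]
    simp_rw [hinner]
    rw [lintegral_mul_const _ ((hf.pow_const 2).ennreal_ofReal)]
  -- assemble
  calc (∫⁻ p in E, φ p)
      = ∫⁻ p, E.indicator φ p := (lintegral_indicator hEm φ).symm
    _ = ∫⁻ y, ∫⁻ x, E.indicator φ (x, y) := by
        rw [Measure.volume_eq_prod]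
        exact lintegral_prod_symm _ (hφm.indicator hEm).aemeasurable
    _ ≤ ∫⁻ y, ENNReal.ofReal (Real.sqrt D)
          * (ENNReal.ofReal (h y) * (J y) ^ ((1:ℝ)/2)) := lintegral_mono inner
    _ = ENNReal.ofReal (Real.sqrt D)
          * ∫⁻ y, ENNReal.ofReal (h y) * (J y) ^ ((1:ℝ)/2) :=
        lintegral_const_mul' _ _ ENNReal.ofReal_ne_top
    _ ≤ ENNReal.ofReal (Real.sqrt D)
          * ((∫⁻ y, ENNReal.ofReal (h y) ^ (2:ℝ)) ^ ((1:ℝ)/2)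
            * (∫⁻ y, ((J y) ^ ((1:ℝ)/2)) ^ (2:ℝ)) ^ ((1:ℝ)/2)) := mul_le_mul_right hcs2 _
    _ = ENNReal.ofReal (Real.sqrt D)
          * ((∫⁻ x, ENNReal.ofReal ((h x)^2)) ^ ((1:ℝ)/2)
            * ((∫⁻ x, ENNReal.ofReal ((f x)^2))
              * (∫⁻ x, ENNReal.ofReal ((g x)^2))) ^ ((1:ℝ)/2)) := by rw [e1, e2, e3]
    _ = ENNReal.ofReal (Real.sqrt (2^s*(4/(3*c))) * M ^ ((1:ℝ)/2))
          * (∫⁻ x : ℝ, ENNReal.ofReal ((f x)^2)) ^ ((1:ℝ)/2)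
          * (∫⁻ x : ℝ, ENNReal.ofReal ((g x)^2)) ^ ((1:ℝ)/2)
          * (∫⁻ x : ℝ, ENNReal.ofReal ((h x)^2)) ^ ((1:ℝ)/2) := by
        rw [ENNReal.mul_rpow_of_nonneg _ _ (by norm_num : (0:ℝ) ≤ 1/2), ← hCM]
        ring
end

section
/- For s ∈ (0,1) and the cubic NLS phase Φ = 2(ξ-ξ₁)(ξ-ξ₃) on the hyperplane ξ = ξ₁ - ξ₂ + ξ₃: if |ξ-ξ₁| ≥ 1 and |ξ-ξ₃| ≥ 1 and |Φ - α| < M, then 1 ≤ |ξ-ξ₃| < (|α|+M)/|ξ-ξ₁| ≤ |α| + M; consequently for fixed ξ, ∫∫ 1_{|Φ-α|<M, |ξ-ξ₁|,|ξ-ξ₃|≥1} dξ₁ dξ₃ ≤ C M (1 + log(|α| + M)). -/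
open MeasureTheory Set

lemma nls_part1 (ξ ξ₁ ξ₃ α M : ℝ) (hM : 1 ≤ M) (h1 : 1 ≤ |ξ - ξ₁|) (h3 : 1 ≤ |ξ - ξ₃|)
    (hΦ : |2 * (ξ - ξ₁) * (ξ - ξ₃) - α| < M) :
    1 ≤ |ξ - ξ₃| ∧ |ξ - ξ₃| < (|α| + M) / |ξ - ξ₁| ∧ (|α| + M) / |ξ - ξ₁| ≤ |α| + M := by
  have h2 : |2 * (ξ - ξ₁) * (ξ - ξ₃)| < |α| + M := by
    have := abs_sub_abs_le_abs_sub (2 * (ξ - ξ₁) * (ξ - ξ₃)) α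
    linarith
  have habs : |2 * (ξ - ξ₁) * (ξ - ξ₃)| = 2 * |ξ - ξ₁| * |ξ - ξ₃| := by
    rw [abs_mul, abs_mul, abs_two]
  have hpos : (0:ℝ) < |ξ - ξ₁| := by linarith
  refine ⟨h3, ?_, div_le_self (by positivity) h1⟩
  rw [lt_div_iff₀ hpos]
  nlinarith [abs_nonneg (ξ - ξ₃)]

lemma nls_slice_bound (ξ x α M : ℝ) (hM : 1 ≤ M) :
    volume {y : ℝ | |2 * (ξ - x) * (ξ - y) - α| < M ∧ 1 ≤ |ξ - x| ∧ 1 ≤ |ξ - y|} ≤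
      Set.indicator (Icc (ξ - (|α| + M)) (ξ - 1) ∪ Icc (ξ + 1) (ξ + (|α| + M)))
        (fun x => ENNReal.ofReal (M / |ξ - x|)) x := by
  set A := |α| + M with hA
  have hA1 : 1 ≤ A := by have := abs_nonneg α; linarith
  by_cases hx : x ∈ Icc (ξ - A) (ξ - 1) ∪ Icc (ξ + 1) (ξ + A)
  · rw [Set.indicator_of_mem hx]
    have hx1 : 1 ≤ |ξ - x| := by
      rcases hx with h | h
      · rw [abs_of_nonneg (by linarith [h.2])]; linarith [h.2]
      · rw [abs_of_nonpos (by linarith [h.1])]; linarith [h.1]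
    have hc : ξ - x ≠ 0 := by intro h; rw [h, abs_zero] at hx1; linarith
    have hcpos : (0:ℝ) < |ξ - x| := by linarith
    have hsub : {y : ℝ | |2 * (ξ - x) * (ξ - y) - α| < M ∧ 1 ≤ |ξ - x| ∧ 1 ≤ |ξ - y|} ⊆
        Metric.ball (ξ - α / (2 * (ξ - x))) (M / (2 * |ξ - x|)) := by
      intro y hy
      obtain ⟨h1, _, _⟩ := hy
      rw [Metric.mem_ball, Real.dist_eq]
      rw [lt_div_iff₀ (by positivity)]
      have key : |y - (ξ - α / (2 * (ξ - x)))| * (2 * |ξ - x|) =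
          |2 * (ξ - x) * (ξ - y) - α| := by
        rw [show (2:ℝ) * |ξ - x| = |2 * (ξ - x)| by rw [abs_mul, abs_two], ← abs_mul]
        rw [← abs_neg]
        congr 1
        field_simp
        ring
      rw [key]; exact h1
    calc volume {y : ℝ | |2 * (ξ - x) * (ξ - y) - α| < M ∧ 1 ≤ |ξ - x| ∧ 1 ≤ |ξ - y|}
        ≤ volume (Metric.ball (ξ - α / (2 * (ξ - x))) (M / (2 * |ξ - x|))) :=
          measure_mono hsub
      _ = ENNReal.ofReal (2 * (M / (2 * |ξ - x|))) := Real.volume_ball _ _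
      _ = ENNReal.ofReal (M / |ξ - x|) := by congr 1; field_simp
  · rw [Set.indicator_of_notMem hx]
    have hempty : {y : ℝ | |2 * (ξ - x) * (ξ - y) - α| < M ∧ 1 ≤ |ξ - x| ∧ 1 ≤ |ξ - y|} = ∅ := by
      ext y
      simp only [mem_setOf_eq, mem_empty_iff_false, iff_false, not_and]
      intro h1 h2 h3
      apply hx
      have h2' : |2 * (ξ - x) * (ξ - y)| < A := by
        have := abs_sub_abs_le_abs_sub (2 * (ξ - x) * (ξ - y)) α
        rw [hA]; linarith
      have habs : |2 * (ξ - x) * (ξ - y)| = 2 * |ξ - x| * |ξ - y| := by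
        rw [abs_mul, abs_mul, abs_two]
      have hle : |ξ - x| ≤ A := by nlinarith
      rcases abs_cases (ξ - x) with ⟨he, _⟩ | ⟨he, _⟩
      · left; constructor <;> [linarith [he ▸ hle]; linarith [he ▸ h2]]
      · right; constructor <;> [linarith [he ▸ h2]; linarith [he ▸ hle]]
    rw [hempty]; simp

lemma nls_piece_right (ξ M A : ℝ) (hM : 0 ≤ M) (hA : 1 ≤ A) :
    ∫⁻ x in Icc (ξ + 1) (ξ + A), ENNReal.ofReal (M / |ξ - x|) =
      ENNReal.ofReal (M * Real.log A) := by
  have hcong : ∀ᵐ x ∂volume, x ∈ Icc (ξ + 1) (ξ + A) →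
      ENNReal.ofReal (M / |ξ - x|) = ENNReal.ofReal (M / (x - ξ)) := by
    refine Filter.Eventually.of_forall fun x hx => ?_
    rw [abs_of_nonpos (by linarith [hx.1]), neg_sub]
  rw [setLIntegral_congr_fun_ae measurableSet_Icc hcong]
  have hcont : ContinuousOn (fun x : ℝ => M / (x - ξ)) (Icc (ξ + 1) (ξ + A)) := by
    apply ContinuousOn.div continuousOn_const (by fun_prop)
    intro x hx
    have := hx.1
    intro h; nlinarith [sub_eq_zero.mp h]
  have hint : IntegrableOn (fun x : ℝ => M / (x - ξ)) (Icc (ξ + 1) (ξ + A)) :=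
    hcont.integrableOn_Icc
  have hnn : 0 ≤ᵐ[volume.restrict (Icc (ξ + 1) (ξ + A))] fun x : ℝ => M / (x - ξ) := by
    refine (ae_restrict_iff' measurableSet_Icc).mpr (Filter.Eventually.of_forall fun x hx => ?_)
    have := hx.1
    simp only [Pi.zero_apply]
    apply div_nonneg hM (by linarith)
  rw [← ofReal_integral_eq_lintegral_ofReal hint hnn]
  congr 1
  rw [integral_Icc_eq_integral_Ioc, ← intervalIntegral.integral_of_le (by linarith)]
  have hsub := intervalIntegral.integral_comp_sub_right (fun t : ℝ => M / t) ξ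
    (a := ξ + 1) (b := ξ + A)
  simp only [add_sub_cancel_left] at hsub
  rw [hsub]
  have h0 : (0:ℝ) ∉ Set.uIcc (1:ℝ) A := by
    rw [Set.uIcc_of_le hA]
    intro h; exact absurd h.1 (by norm_num)
  rw [show (fun x : ℝ => M / x) = fun x : ℝ => M * (1 / x) from funext fun x => by ring,
    intervalIntegral.integral_const_mul, integral_one_div h0, div_one]

lemma nls_piece_left (ξ M A : ℝ) (hM : 0 ≤ M) (hA : 1 ≤ A) :
    ∫⁻ x in Icc (ξ - A) (ξ - 1), ENNReal.ofReal (M / |ξ - x|) =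
      ENNReal.ofReal (M * Real.log A) := by
  have hcong : ∀ᵐ x ∂volume, x ∈ Icc (ξ - A) (ξ - 1) →
      ENNReal.ofReal (M / |ξ - x|) = ENNReal.ofReal (M / (ξ - x)) := by
    refine Filter.Eventually.of_forall fun x hx => ?_
    rw [abs_of_nonneg (by linarith [hx.2])]
  rw [setLIntegral_congr_fun_ae measurableSet_Icc hcong]
  have hcont : ContinuousOn (fun x : ℝ => M / (ξ - x)) (Icc (ξ - A) (ξ - 1)) := by
    apply ContinuousOn.div continuousOn_const (by fun_prop)
    intro x hx
    have := hx.2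
    intro h; nlinarith [sub_eq_zero.mp h]
  have hint : IntegrableOn (fun x : ℝ => M / (ξ - x)) (Icc (ξ - A) (ξ - 1)) :=
    hcont.integrableOn_Icc
  have hnn : 0 ≤ᵐ[volume.restrict (Icc (ξ - A) (ξ - 1))] fun x : ℝ => M / (ξ - x) := by
    refine (ae_restrict_iff' measurableSet_Icc).mpr (Filter.Eventually.of_forall fun x hx => ?_)
    have := hx.2
    simp only [Pi.zero_apply]
    apply div_nonneg hM (by linarith)
  rw [← ofReal_integral_eq_lintegral_ofReal hint hnn]
  congr 1
  rw [integral_Icc_eq_integral_Ioc, ← intervalIntegral.integral_of_le (by linarith)]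
  have hsub := intervalIntegral.integral_comp_sub_left (fun t : ℝ => M / t) ξ
    (a := ξ - A) (b := ξ - 1)
  simp only [sub_sub_cancel] at hsub
  rw [hsub]
  have h0 : (0:ℝ) ∉ Set.uIcc (1:ℝ) A := by
    rw [Set.uIcc_of_le hA]
    intro h; exact absurd h.1 (by norm_num)
  rw [show (fun x : ℝ => M / x) = fun x : ℝ => M * (1 / x) from funext fun x => by ring,
    intervalIntegral.integral_const_mul, integral_one_div h0, div_one]

lemma nls_main_part2 (ξ α M : ℝ) (hM : 1 ≤ M) :
    volume {p : ℝ × ℝ | |2 * (ξ - p.1) * (ξ - p.2) - α| < M ∧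
        1 ≤ |ξ - p.1| ∧ 1 ≤ |ξ - p.2|}
      ≤ ENNReal.ofReal (2 * M * (1 + Real.log (|α| + M))) := by
  have hA1 : 1 ≤ |α| + M := by have := abs_nonneg α; linarith
  have hS : MeasurableSet {p : ℝ × ℝ | |2 * (ξ - p.1) * (ξ - p.2) - α| < M ∧
      1 ≤ |ξ - p.1| ∧ 1 ≤ |ξ - p.2|} := by
    have h1 : Measurable fun p : ℝ × ℝ => |2 * (ξ - p.1) * (ξ - p.2) - α| :=
      (by continuity : Continuous fun p : ℝ × ℝ => |2 * (ξ - p.1) * (ξ - p.2) - α|).measurable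
    have h2 : Measurable fun p : ℝ × ℝ => |ξ - p.1| :=
      (by continuity : Continuous fun p : ℝ × ℝ => |ξ - p.1|).measurable
    have h3 : Measurable fun p : ℝ × ℝ => |ξ - p.2| :=
      (by continuity : Continuous fun p : ℝ × ℝ => |ξ - p.2|).measurable
    exact (measurableSet_lt h1 measurable_const).inter
      ((measurableSet_le measurable_const h2).inter (measurableSet_le measurable_const h3))
  rw [Measure.volume_eq_prod, Measure.prod_apply hS]
  have hE : MeasurableSet (Icc (ξ - (|α| + M)) (ξ - 1) ∪ Icc (ξ + 1) (ξ + (|α| + M))) :=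
    measurableSet_Icc.union measurableSet_Icc
  calc ∫⁻ x, volume (Prod.mk x ⁻¹' {p : ℝ × ℝ | |2 * (ξ - p.1) * (ξ - p.2) - α| < M ∧
          1 ≤ |ξ - p.1| ∧ 1 ≤ |ξ - p.2|})
      ≤ ∫⁻ x, Set.indicator (Icc (ξ - (|α| + M)) (ξ - 1) ∪ Icc (ξ + 1) (ξ + (|α| + M)))
          (fun x => ENNReal.ofReal (M / |ξ - x|)) x := by
        apply lintegral_mono
        intro x
        have := nls_slice_bound ξ x α M hM
        simpa using this
    _ = ∫⁻ x in Icc (ξ - (|α| + M)) (ξ - 1) ∪ Icc (ξ + 1) (ξ + (|α| + M)),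
          ENNReal.ofReal (M / |ξ - x|) := lintegral_indicator hE _
    _ ≤ (∫⁻ x in Icc (ξ - (|α| + M)) (ξ - 1), ENNReal.ofReal (M / |ξ - x|)) +
          ∫⁻ x in Icc (ξ + 1) (ξ + (|α| + M)), ENNReal.ofReal (M / |ξ - x|) :=
        lintegral_union_le _ _ _
    _ = ENNReal.ofReal (M * Real.log (|α| + M)) + ENNReal.ofReal (M * Real.log (|α| + M)) := by
        rw [nls_piece_left ξ M _ (by linarith) hA1, nls_piece_right ξ M _ (by linarith) hA1]
    _ ≤ ENNReal.ofReal (2 * M * (1 + Real.log (|α| + M))) := by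
        rw [← ENNReal.ofReal_add (mul_nonneg (by linarith) (Real.log_nonneg hA1))
          (mul_nonneg (by linarith) (Real.log_nonneg hA1))]
        apply ENNReal.ofReal_le_ofReal
        have hlog := Real.log_nonneg hA1
        nlinarith

/-- NLS phase bounds: on the region `|ξ-ξ₁|, |ξ-ξ₃| ≥ 1` with `|Φ-α| < M`,
`Φ = 2(ξ-ξ₁)(ξ-ξ₃)`, one has `1 ≤ |ξ-ξ₃| < (|α|+M)/|ξ-ξ₁| ≤ |α|+M`; consequently the
measure in `(ξ₁,ξ₃)` of this region is at most `C M (1 + log(|α|+M))`, uniformly in ξ. -/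
theorem nls_phase_region_bound :
    (∀ ξ ξ₁ ξ₃ α M : ℝ, 1 ≤ M → 1 ≤ |ξ - ξ₁| → 1 ≤ |ξ - ξ₃| →
      |2 * (ξ - ξ₁) * (ξ - ξ₃) - α| < M →
      1 ≤ |ξ - ξ₃| ∧ |ξ - ξ₃| < (|α| + M) / |ξ - ξ₁| ∧ (|α| + M) / |ξ - ξ₁| ≤ |α| + M) ∧
    (∃ C > 0, ∀ ξ α M : ℝ, 1 ≤ M →
      volume {p : ℝ × ℝ | |2 * (ξ - p.1) * (ξ - p.2) - α| < M ∧
          1 ≤ |ξ - p.1| ∧ 1 ≤ |ξ - p.2|}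
        ≤ ENNReal.ofReal (C * M * (1 + Real.log (|α| + M)))) := by
  constructor
  · exact fun ξ ξ₁ ξ₃ α M hM h1 h3 hΦ => nls_part1 ξ ξ₁ ξ₃ α M hM h1 h3 hΦ
  · exact ⟨2, by norm_num, fun ξ α M hM => nls_main_part2 ξ α M hM⟩
end
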